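/- Convergence of the logarithmic tail series: for complex a₁ with -a₁ ∉ ℕ, a₃, a₄, b₁, b₂, b₃ with a₃-a₁, a₄-a₁ ∉ ℤ, a natural number m, and complex z with |z| > 1, the series ∑_{ν=m}^∞ (|z|^{-ν}/(ν!(ν-m)!)) |Γ(a₁+ν)Γ(a₃-a₁-ν)Γ(a₄-a₁-ν)/(Γ(b₁-a₁-ν)Γ(b₂-a₁-ν)Γ(b₃-a₁-ν))| (|A_ν| + |log(-z)|) converges, where A_ν is as in the paper's first expansion (a sum of eight digamma values growing like O(log ν)). -/

import Mathlib

open Finset Nat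

/-- The digamma function `ψ = Γ'/Γ`. -/
noncomputable def digamma (z : ℂ) : ℂ := deriv Complex.Gamma z / Complex.Gamma z

noncomputable def Complex.abs : AbsoluteValue ℂ ℝ := NormedField.toAbsoluteValue ℂ

lemma Complex.abs_apply' (z : ℂ) : Complex.abs z = ‖z‖ := rfl

lemma Complex.abs_natCast (n : ℕ) : Complex.abs n = n := by
  rw [Complex.abs_apply']; exact Complex.norm_natCast n

lemma digamma_add_one {z : ℂ} (hz : ∀ n : ℕ, z ≠ -n) :
    digamma (z + 1) = digamma z + 1 / z := by
  have hz0 : z ≠ 0 := by simpa using hz 0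
  have hdiff : DifferentiableAt ℂ Complex.Gamma z := Complex.differentiableAt_Gamma z hz
  have hΓ : Complex.Gamma z ≠ 0 := Complex.Gamma_ne_zero hz
  have h1 : deriv (fun w => Complex.Gamma (w + 1)) z = deriv Complex.Gamma (z + 1) :=
    deriv_comp_add_const _ _ _
  have h2 : (fun w => Complex.Gamma (w + 1)) =ᶠ[nhds z] fun w => w * Complex.Gamma w := by
    filter_upwards [isOpen_ne.mem_nhds hz0] with w hw
    exact Complex.Gamma_add_one w hw
  have h4 : deriv (fun w => w * Complex.Gamma w) z
      = Complex.Gamma z + z * deriv Complex.Gamma z := by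
    have h : HasDerivAt (fun w => w * Complex.Gamma w)
        (1 * Complex.Gamma z + z * deriv Complex.Gamma z) z := (hasDerivAt_id z).mul hdiff.hasDerivAt
    rw [h.deriv]; ring
  have h5 : deriv Complex.Gamma (z + 1) = Complex.Gamma z + z * deriv Complex.Gamma z := by
    rw [← h1, h2.deriv_eq, h4]
  rw [digamma, digamma, h5, Complex.Gamma_add_one z hz0]
  field_simp
  ring

lemma shift_ne {z : ℂ} (hz : ∀ n : ℕ, z ≠ -n) (ν : ℕ) : ∀ n : ℕ, z + ν ≠ -n := by
  intro n h
  exact hz (ν + n) (by push_cast; linear_combination h)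

lemma Gamma_add_nat {z : ℂ} (hz : ∀ n : ℕ, z ≠ -n) (ν : ℕ) :
    Complex.Gamma (z + ν) = Complex.Gamma z * ∏ j ∈ range ν, (z + j) := by
  induction ν with
  | zero => simp
  | succ n ih =>
    have h0 : z + n ≠ 0 := by simpa using shift_ne hz n 0
    have h1 : Complex.Gamma (z + n + 1) = (z + n) * Complex.Gamma (z + n) :=
      Complex.Gamma_add_one (z + n) h0
    push_cast
    rw [show z + ((n:ℂ) + 1) = z + n + 1 by ring, h1, ih, prod_range_succ]; ring

lemma digamma_add_nat {z : ℂ} (hz : ∀ n : ℕ, z ≠ -n) (ν : ℕ) :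
    digamma (z + ν) = digamma z + ∑ j ∈ range ν, 1 / (z + j) := by
  induction ν with
  | zero => simp
  | succ n ih =>
    have h1 : digamma (z + n + 1) = digamma (z + n) + 1 / (z + n) :=
      digamma_add_one (shift_ne hz n)
    have h2 : z + ((n : ℂ) + 1) = z + n + 1 := by ring
    push_cast
    rw [h2, h1, ih, sum_range_succ]
    ring

lemma exists_delta {w : ℂ} (hw : ∀ j : ℕ, w + j ≠ 0) :
    ∃ δ : ℝ, 0 < δ ∧ δ ≤ 1 ∧ ∀ j : ℕ, δ ≤ Complex.abs (w + j) := by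
  obtain ⟨J, hJ⟩ : ∃ J : ℕ, Complex.abs w ≤ J := ⟨⌈Complex.abs w⌉₊, Nat.le_ceil _⟩
  have hne : (range (J + 1)).Nonempty := ⟨0, by simp⟩
  set δ₀ := (range (J + 1)).inf' hne fun j => Complex.abs (w + j) with hδ₀
  have hδ₀pos : 0 < δ₀ := by
    rw [Finset.lt_inf'_iff]
    intro j _
    exact AbsoluteValue.pos _ (hw j)
  refine ⟨min δ₀ 1, by positivity, min_le_right _ _, fun j => ?_⟩
  rcases le_or_gt j J with h | h
  · exact le_trans (min_le_left _ _)
      (Finset.inf'_le _ (by simpa using Nat.lt_succ_of_le h))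
  · refine le_trans (min_le_right _ _) ?_
    have h1 : (j : ℝ) - Complex.abs w ≤ Complex.abs (w + j) := by
      have h2 := Complex.abs.add_le (w + j) (-w)
      have h3 : Complex.abs ((w + j) + -w) = (j : ℝ) := by
        simp [Complex.abs_natCast]
      rw [h3, map_neg_eq_map] at h2
      linarith
    have : (1 : ℝ) ≤ (j : ℝ) - Complex.abs w := by
      have : ((J : ℝ) + 1) ≤ (j : ℝ) := by exact_mod_cast h
      linarith
    linarith

lemma exists_delta' {c : ℂ} (hc : ∀ n : ℤ, c ≠ n) :
    ∃ δ : ℝ, 0 < δ ∧ δ ≤ 1 ∧ ∀ j : ℕ, δ ≤ Complex.abs (c - (j + 1)) := by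
  obtain ⟨δ, h0, h1, h⟩ := exists_delta (w := 1 - c)
    (fun j hj => hc (1 + j) (by push_cast; linear_combination -hj))
  refine ⟨δ, h0, h1, fun j => ?_⟩
  have := h j
  rwa [show (1 : ℂ) - c + j = -(c - (j + 1)) by ring, map_neg_eq_map] at this

lemma nonpole_sub_nat {c : ℂ} (hc : ∀ n : ℤ, c ≠ n) (ν : ℕ) : ∀ n : ℕ, c - ν ≠ -n := by
  intro n h
  exact hc ((ν : ℤ) - n) (by push_cast; linear_combination h)

lemma cast_refl_aux {ν j : ℕ} (h : j < ν) : ((ν - 1 - j : ℕ) : ℂ) + 1 = (ν : ℂ) - j := by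
  have h2 : ν - 1 - j = ν - (1 + j) := by omega
  rw [h2, Nat.cast_sub (by omega)]
  push_cast; ring

lemma factorial_le_sub (a b : ℕ) : a ! ≤ (a - b)! * (a + 1) ^ b := by
  induction b with
  | zero => simp
  | succ n ih =>
    rcases le_or_gt a n with h | h
    · have h1 : a - n = a - (n + 1) := by omega
      calc a ! ≤ (a - n)! * (a + 1) ^ n := ih
        _ = (a - (n + 1))! * (a + 1) ^ n := by rw [h1]
        _ ≤ (a - (n + 1))! * (a + 1) ^ (n + 1) :=
            Nat.mul_le_mul_left _ (Nat.pow_le_pow_right (by omega) (by omega))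
    · have h1 : a - n = a - (n + 1) + 1 := by omega
      calc a ! ≤ (a - n)! * (a + 1) ^ n := ih
        _ = (a - (n + 1) + 1) * (a - (n + 1))! * (a + 1) ^ n := by
            rw [h1, Nat.factorial_succ]
        _ ≤ (a + 1) * (a - (n + 1))! * (a + 1) ^ n :=
            Nat.mul_le_mul_right _ (Nat.mul_le_mul_right _ (by omega))
        _ = (a - (n + 1))! * (a + 1) ^ (n + 1) := by ring

lemma prod_shift_factorial (N ν : ℕ) :
    (N ! : ℝ) * ∏ j ∈ range ν, ((N : ℝ) + 1 + j) = ((N + ν)! : ℝ) := by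
  induction ν with
  | zero => simp
  | succ n ih =>
    rw [prod_range_succ, ← mul_assoc, ih, show N + (n + 1) = (N + n) + 1 by omega,
      Nat.factorial_succ]
    push_cast; ring

lemma prod_range_add_one_factorial (n : ℕ) :
    ∏ j ∈ range n, ((j : ℝ) + 1) = (n ! : ℝ) := by
  have := prod_shift_factorial 0 n
  simp only [Nat.factorial_zero, Nat.cast_one, one_mul, Nat.zero_add, Nat.cast_zero] at this
  rw [← this]
  exact prod_congr rfl fun j _ => by ring

lemma abs_prod_refl (c : ℂ) (ν : ℕ) :
    ∏ j ∈ range ν, Complex.abs (c - ν + j) = ∏ i ∈ range ν, Complex.abs (c - (i + 1)) := by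
  rw [← prod_range_reflect (fun i => Complex.abs (c - (i + 1))) ν]
  refine prod_congr rfl fun j hj => ?_
  rw [mem_range] at hj
  congr 1
  rw [cast_refl_aux hj]
  ring

lemma abs_sub_ge (c w : ℂ) : Complex.abs w - Complex.abs c ≤ Complex.abs (c - w) := by
  have h := Complex.abs.add_le (c - w) w
  have h2 : Complex.abs (c - w + w) = Complex.abs c := by ring_nf
  rw [h2] at h
  have h3 : Complex.abs (c - w) = Complex.abs (w - c) := by
    rw [show c - w = -(w - c) by ring, map_neg_eq_map]
  linarith [h3, Complex.abs.add_le (w - c) c, (by ring_nf : Complex.abs (w - c + c) = Complex.abs w)]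

lemma abs_cast_succ (n : ℕ) : Complex.abs ((n : ℂ) + 1) = (n : ℝ) + 1 := by
  rw [show ((n : ℂ) + 1) = ((n + 1 : ℕ) : ℂ) by push_cast; ring, Complex.abs_natCast]
  push_cast; ring

lemma prod_lower {c : ℂ} {δ : ℝ} (hδ0 : 0 < δ) (hδ1 : δ ≤ 1)
    (hδ : ∀ j : ℕ, δ ≤ Complex.abs (c - (j + 1))) {N : ℕ} (hN : Complex.abs c ≤ N) (ν : ℕ) :
    δ ^ N * ((ν - N)! : ℝ) ≤ ∏ i ∈ range ν, Complex.abs (c - (i + 1)) := by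
  rcases le_or_gt ν N with h | h
  · have h1 : ν - N = 0 := by omega
    rw [h1]
    simp only [Nat.factorial_zero, Nat.cast_one, mul_one]
    calc δ ^ N ≤ δ ^ ν := pow_le_pow_of_le_one hδ0.le hδ1 h
      _ = ∏ _i ∈ range ν, δ := by rw [prod_const, card_range]
      _ ≤ _ := prod_le_prod (fun _ _ => hδ0.le) fun i _ => hδ i
  · rw [← prod_range_mul_prod_Ico _ h.le]
    have h1 : δ ^ N ≤ ∏ i ∈ range N, Complex.abs (c - (i + 1)) := by
      calc δ ^ N = ∏ _i ∈ range N, δ := by rw [prod_const, card_range]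
        _ ≤ _ := prod_le_prod (fun _ _ => hδ0.le) fun i _ => hδ i
    have h2 : ((ν - N)! : ℝ) ≤ ∏ i ∈ Ico N ν, Complex.abs (c - (i + 1)) := by
      rw [prod_Ico_eq_prod_range, ← prod_range_add_one_factorial (ν - N)]
      refine prod_le_prod (fun _ _ => by positivity) fun t _ => ?_
      have h3 := abs_sub_ge c (((N + t : ℕ) : ℂ) + 1)
      rw [abs_cast_succ] at h3
      have h4 : (t : ℝ) + 1 ≤ ((N + t : ℕ) : ℝ) + 1 - Complex.abs c := by
        push_cast; linarith
      exact le_trans h4 h3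
    calc δ ^ N * ((ν - N)! : ℝ) ≤ _ :=
      mul_le_mul h1 h2 (by positivity) (by positivity)

lemma prod_upper {c : ℂ} {N : ℕ} (hN : Complex.abs c ≤ N) (ν : ℕ) :
    (N ! : ℝ) * ∏ i ∈ range ν, Complex.abs (c - (i + 1)) ≤ ((N + ν)! : ℝ) := by
  rw [← prod_shift_factorial N ν]
  refine mul_le_mul_of_nonneg_left (prod_le_prod (fun _ _ => by positivity) fun i _ => ?_)
    (by positivity)
  have h1 := Complex.abs.add_le c (-((i : ℂ) + 1))
  rw [show c + -((i : ℂ) + 1) = c - (i + 1) by ring, map_neg_eq_map, abs_cast_succ] at h1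
  calc Complex.abs (c - (i + 1)) ≤ Complex.abs c + ((i : ℝ) + 1) := h1
    _ ≤ (N : ℝ) + 1 + i := by linarith

lemma abs_term_ge {c : ℂ} {δ : ℝ}
    (hδ : ∀ j : ℕ, δ ≤ Complex.abs (c - (j + 1))) {ν j : ℕ} (hj : j < ν) :
    δ ≤ Complex.abs (c - ν + j) := by
  have h := hδ (ν - 1 - j)
  rw [cast_refl_aux hj] at h
  rwa [show c - ((ν : ℂ) - j) = c - ν + j by ring] at h

lemma Gamma_abs_eq {c : ℂ} (hc : ∀ n : ℤ, c ≠ n) (ν : ℕ) :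
    Complex.abs (Complex.Gamma c)
      = Complex.abs (Complex.Gamma (c - ν)) * ∏ i ∈ range ν, Complex.abs (c - (i + 1)) := by
  have hid := Gamma_add_nat (nonpole_sub_nat hc ν) ν
  rw [show c - (ν : ℂ) + (ν : ℂ) = c by ring] at hid
  rw [hid, map_mul, map_prod]
  rw [abs_prod_refl]

lemma Gamma_sub_abs_le {c : ℂ} (hc : ∀ n : ℤ, c ≠ n) {δ : ℝ} (hδ0 : 0 < δ) (hδ1 : δ ≤ 1)
    (hδ : ∀ j : ℕ, δ ≤ Complex.abs (c - (j + 1))) {N : ℕ} (hN : Complex.abs c ≤ N) (ν : ℕ) :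
    Complex.abs (Complex.Gamma (c - ν)) ≤
      Complex.abs (Complex.Gamma c) / (δ ^ N * ((ν - N)! : ℝ)) := by
  have hQ : (0:ℝ) < δ ^ N * ((ν - N)! : ℝ) := by positivity
  rw [le_div_iff₀ hQ, Gamma_abs_eq hc ν]
  exact mul_le_mul_of_nonneg_left (prod_lower hδ0 hδ1 hδ hN ν) (AbsoluteValue.nonneg _ _)

lemma Gamma_sub_abs_ge {d : ℂ} (hd : ∀ n : ℤ, d ≠ n) {N : ℕ} (hN : Complex.abs d ≤ N) (ν : ℕ) :
    Complex.abs (Complex.Gamma d) * (N ! : ℝ) / (((N + ν)! : ℕ) : ℝ) ≤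
      Complex.abs (Complex.Gamma (d - ν)) := by
  have hP : (0:ℝ) < (((N + ν)! : ℕ) : ℝ) := by positivity
  rw [div_le_iff₀ hP]
  calc Complex.abs (Complex.Gamma d) * (N ! : ℝ)
      = Complex.abs (Complex.Gamma (d - ν)) *
        ((N ! : ℝ) * ∏ i ∈ range ν, Complex.abs (d - (i + 1))) := by
        rw [Gamma_abs_eq hd ν]; ring
    _ ≤ Complex.abs (Complex.Gamma (d - ν)) * (((N + ν)! : ℕ) : ℝ) :=
        mul_le_mul_of_nonneg_left (prod_upper hN ν) (AbsoluteValue.nonneg _ _)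

lemma digamma_sub_abs_le {c : ℂ} (hc : ∀ n : ℤ, c ≠ n) {δ : ℝ} (hδ0 : 0 < δ)
    (hδ : ∀ j : ℕ, δ ≤ Complex.abs (c - (j + 1))) (ν : ℕ) :
    Complex.abs (digamma (c - ν)) ≤ Complex.abs (digamma c) + ν * δ⁻¹ := by
  have hid := digamma_add_nat (nonpole_sub_nat hc ν) ν
  rw [show c - (ν : ℂ) + (ν : ℂ) = c by ring] at hid
  have h1 : digamma (c - ν) = digamma c - ∑ j ∈ range ν, 1 / (c - ν + j) := by
    rw [hid]; ring
  rw [h1, sub_eq_add_neg]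
  refine le_trans (Complex.abs.add_le _ _) ?_
  rw [map_neg_eq_map]
  have h2 : Complex.abs (∑ j ∈ range ν, 1 / (c - ν + j)) ≤ ν * δ⁻¹ := by
    refine le_trans (Complex.abs.sum_le _ _) ?_
    calc ∑ j ∈ range ν, Complex.abs (1 / (c - ν + j))
        ≤ ∑ _j ∈ range ν, δ⁻¹ := by
          refine sum_le_sum fun j hj => ?_
          rw [mem_range] at hj
          rw [map_div₀, map_one, one_div]
          exact inv_anti₀ hδ0 (abs_term_ge hδ hj)
      _ = ν * δ⁻¹ := by rw [sum_const, card_range, nsmul_eq_mul]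
  linarith

lemma Gamma_addnat_abs_le {a : ℂ} (ha : ∀ n : ℕ, a ≠ -n) {N : ℕ} (hN : Complex.abs a ≤ N)
    (ν : ℕ) : Complex.abs (Complex.Gamma (a + ν)) ≤
      Complex.abs (Complex.Gamma a) * (((N + ν)! : ℕ) : ℝ) / (N ! : ℝ) := by
  have hNf : (0:ℝ) < (N ! : ℝ) := by positivity
  rw [Gamma_add_nat ha ν, map_mul, map_prod, div_eq_mul_inv, mul_assoc]
  refine mul_le_mul_of_nonneg_left ?_ (AbsoluteValue.nonneg _ _)
  rw [← prod_shift_factorial N ν, mul_comm ((N ! : ℝ)), mul_assoc, mul_inv_cancel₀ hNf.ne',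
    mul_one]
  refine prod_le_prod (fun _ _ => AbsoluteValue.nonneg _ _) fun j _ => ?_
  have h1 := Complex.abs.add_le a j
  rw [Complex.abs_natCast] at h1
  calc Complex.abs (a + j) ≤ Complex.abs a + j := h1
    _ ≤ (N : ℝ) + 1 + j := by linarith

lemma digamma_addnat_abs_le {a : ℂ} (ha : ∀ n : ℕ, a ≠ -n) {δ : ℝ} (hδ0 : 0 < δ)
    (hδ : ∀ j : ℕ, δ ≤ Complex.abs (a + j)) (ν : ℕ) :
    Complex.abs (digamma (a + ν)) ≤ Complex.abs (digamma a) + ν * δ⁻¹ := by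
  rw [digamma_add_nat ha ν]
  refine le_trans (Complex.abs.add_le _ _) ?_
  have h2 : Complex.abs (∑ j ∈ range ν, 1 / (a + j)) ≤ ν * δ⁻¹ := by
    refine le_trans (Complex.abs.sum_le _ _) ?_
    calc ∑ j ∈ range ν, Complex.abs (1 / (a + j))
        ≤ ∑ _j ∈ range ν, δ⁻¹ := by
          refine sum_le_sum fun j _ => ?_
          rw [map_div₀, map_one, one_div]
          exact inv_anti₀ hδ0 (hδ j)
      _ = ν * δ⁻¹ := by rw [sum_const, card_range, nsmul_eq_mul]
  linarith

lemma term_gamma_zero {d : ℂ} {n : ℤ} (hd : d = n) {ν : ℕ} (hν : n ≤ (ν : ℤ)) :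
    Complex.Gamma (d - ν) = 0 := by
  rw [Complex.Gamma_eq_zero_iff]
  refine ⟨((ν : ℤ) - n).toNat, ?_⟩
  have h2 : (((ν : ℤ) - n).toNat : ℤ) = (ν : ℤ) - n := Int.toNat_of_nonneg (by omega)
  have h3 : ((((ν : ℤ) - n).toNat : ℕ) : ℂ) = (ν : ℂ) - (n : ℂ) := by
    exact_mod_cast congrArg (Int.cast : ℤ → ℂ) h2
  rw [hd, h3]; ring

lemma summable_aux {B : ℝ} (hB : 0 ≤ B) (M : ℕ) {r : ℝ} (h0 : 0 < r) (h1 : r < 1) :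
    Summable fun k : ℕ => ((k : ℝ) + B) ^ M * r ^ k := by
  have S : Summable fun n : ℕ => (n : ℝ) ^ M * r ^ n :=
    summable_pow_mul_geometric_of_norm_lt_one M
      (by rwa [Real.norm_eq_abs, abs_of_pos h0])
  have S1 : Summable fun n : ℕ => ((n + 1 : ℕ) : ℝ) ^ M * r ^ (n + 1) :=
    (summable_nat_add_iff (f := fun n : ℕ => (n : ℝ) ^ M * r ^ n) 1).2 S
  have S2 : Summable fun n : ℕ => ((n : ℝ) + 1) ^ M * r ^ n := by
    refine (S1.mul_left r⁻¹).congr fun n => ?_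
    have : ((n + 1 : ℕ) : ℝ) = (n : ℝ) + 1 := by push_cast; ring
    rw [this, pow_succ]
    field_simp
  refine Summable.of_nonneg_of_le (fun k => by positivity) (fun k => ?_)
    (S2.mul_left ((B + 1) ^ M))
  have h3 : ((k : ℝ) + B) ^ M ≤ (B + 1) ^ M * ((k : ℝ) + 1) ^ M := by
    rw [← mul_pow]
    refine pow_le_pow_left₀ (by positivity) ?_ M
    have h4 : (0:ℝ) ≤ B * k := mul_nonneg hB (Nat.cast_nonneg k)
    nlinarith
  calc ((k : ℝ) + B) ^ M * r ^ k ≤ ((B + 1) ^ M * ((k : ℝ) + 1) ^ M) * r ^ k :=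
        mul_le_mul_of_nonneg_right h3 (by positivity)
    _ = (B + 1) ^ M * (((k : ℝ) + 1) ^ M * r ^ k) := by ring

lemma abs_comb8 (p1 p2 p3 p4 p5 p6 p7 p8 : ℂ) :
    Complex.abs (p1 + p2 + p3 + p4 - p5 - p6 - p7 - p8) ≤
      Complex.abs p1 + Complex.abs p2 + Complex.abs p3 + Complex.abs p4 +
      Complex.abs p5 + Complex.abs p6 + Complex.abs p7 + Complex.abs p8 := by
  have t : ∀ x y : ℂ, Complex.abs (x - y) ≤ Complex.abs x + Complex.abs y := fun x y => by
    rw [sub_eq_add_neg]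
    exact (Complex.abs.add_le x (-y)).trans (by rw [map_neg_eq_map])
  refine le_trans (t _ p8) (add_le_add ?_ le_rfl)
  refine le_trans (t _ p7) (add_le_add ?_ le_rfl)
  refine le_trans (t _ p6) (add_le_add ?_ le_rfl)
  refine le_trans (t _ p5) (add_le_add ?_ le_rfl)
  refine le_trans (Complex.abs.add_le _ p4) (add_le_add ?_ le_rfl)
  refine le_trans (Complex.abs.add_le _ p3) (add_le_add ?_ le_rfl)
  exact Complex.abs.add_le p1 p2

set_option maxHeartbeats 2000000 in
/-- Convergence of the logarithmic tail series in the first expansion (2.1):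
the series over `ν = m, m+1, …` is written with shifted index `ν = m + k`. -/
theorem log_tail_series_summable (m : ℕ) (a₁ a₃ a₄ b₁ b₂ b₃ z : ℂ)
    (ha₁ : ∀ k : ℕ, a₁ ≠ -k)
    (h31 : ∀ n : ℤ, a₃ - a₁ ≠ n) (h41 : ∀ n : ℤ, a₄ - a₁ ≠ n)
    (hz : 1 < norm z) :
    Summable (fun k : ℕ =>
      (norm z) ^ (-((m + k : ℕ) : ℤ)) /
        (((m + k).factorial : ℝ) * (k.factorial : ℝ)) *
      norm
        (Complex.Gamma (a₁ + (m + k : ℕ)) * Complex.Gamma (a₃ - a₁ - (m + k : ℕ)) *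
          Complex.Gamma (a₄ - a₁ - (m + k : ℕ)) /
          (Complex.Gamma (b₁ - a₁ - (m + k : ℕ)) * Complex.Gamma (b₂ - a₁ - (m + k : ℕ)) *
            Complex.Gamma (b₃ - a₁ - (m + k : ℕ)))) *
      (norm
        (digamma ((m + k : ℕ) + 1) + digamma ((k : ℂ) + 1) +
          digamma (a₃ - a₁ - (m + k : ℕ)) + digamma (a₄ - a₁ - (m + k : ℕ)) -
          digamma (a₁ + (m + k : ℕ)) - digamma (b₁ - a₁ - (m + k : ℕ)) -
          digamma (b₂ - a₁ - (m + k : ℕ)) - digamma (b₃ - a₁ - (m + k : ℕ))) +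
        norm (Complex.log (-z)))) := by
  simp only [← Complex.abs_apply'] at hz ⊢
  by_cases hint : (∃ n : ℤ, b₁ - a₁ = n) ∨ (∃ n : ℤ, b₂ - a₁ = n) ∨ (∃ n : ℤ, b₃ - a₁ = n)
  · have main : ∀ K : ℕ, (∀ k, K ≤ k →
        Complex.Gamma (b₁ - a₁ - ((m + k : ℕ) : ℂ)) *
          Complex.Gamma (b₂ - a₁ - ((m + k : ℕ) : ℂ)) *
          Complex.Gamma (b₃ - a₁ - ((m + k : ℕ) : ℂ)) = 0) → Summable (fun k : ℕ =>
      (Complex.abs z) ^ (-((m + k : ℕ) : ℤ)) /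
        (((m + k).factorial : ℝ) * (k.factorial : ℝ)) *
      Complex.abs
        (Complex.Gamma (a₁ + (m + k : ℕ)) * Complex.Gamma (a₃ - a₁ - (m + k : ℕ)) *
          Complex.Gamma (a₄ - a₁ - (m + k : ℕ)) /
          (Complex.Gamma (b₁ - a₁ - (m + k : ℕ)) * Complex.Gamma (b₂ - a₁ - (m + k : ℕ)) *
            Complex.Gamma (b₃ - a₁ - (m + k : ℕ)))) *
      (Complex.abs
        (digamma ((m + k : ℕ) + 1) + digamma ((k : ℂ) + 1) +
          digamma (a₃ - a₁ - (m + k : ℕ)) + digamma (a₄ - a₁ - (m + k : ℕ)) -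
          digamma (a₁ + (m + k : ℕ)) - digamma (b₁ - a₁ - (m + k : ℕ)) -
          digamma (b₂ - a₁ - (m + k : ℕ)) - digamma (b₃ - a₁ - (m + k : ℕ))) +
        Complex.abs (Complex.log (-z)))) := by
      intro K hK
      refine summable_of_ne_finset_zero (s := Finset.range K) fun k hk => ?_
      rw [Finset.mem_range, not_lt] at hk
      rw [hK k hk, div_zero, map_zero, mul_zero, zero_mul]
    rcases hint with ⟨n, hn⟩ | ⟨n, hn⟩ | ⟨n, hn⟩
    · refine main n.toNat fun k hk => ?_
      rw [term_gamma_zero hn (by have := Int.self_le_toNat n; push_cast; omega),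
        zero_mul, zero_mul]
    · refine main n.toNat fun k hk => ?_
      rw [term_gamma_zero hn (by have := Int.self_le_toNat n; push_cast; omega),
        mul_zero, zero_mul]
    · refine main n.toNat fun k hk => ?_
      rw [term_gamma_zero hn (by have := Int.self_le_toNat n; push_cast; omega), mul_zero]
  · push_neg at hint
    obtain ⟨hd₁, hd₂, hd₃⟩ := hint
    obtain ⟨δ3, hδ30, hδ31, hδ3⟩ := exists_delta' h31
    obtain ⟨δ4, hδ40, hδ41, hδ4⟩ := exists_delta' h41
    obtain ⟨e1, he10, he11, he1⟩ := exists_delta' hd₁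
    obtain ⟨e2, he20, he21, he2⟩ := exists_delta' hd₂
    obtain ⟨e3, he30, he31, he3⟩ := exists_delta' hd₃
    obtain ⟨da, hda0, hda1, hda⟩ :=
      exists_delta (w := a₁) (fun j hj => ha₁ j (by linear_combination hj))
    set N := ⌈Complex.abs a₁⌉₊ + ⌈Complex.abs (a₃ - a₁)⌉₊ + ⌈Complex.abs (a₄ - a₁)⌉₊ +
      ⌈Complex.abs (b₁ - a₁)⌉₊ + ⌈Complex.abs (b₂ - a₁)⌉₊ + ⌈Complex.abs (b₃ - a₁)⌉₊
      with hNdef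
    have hcast : ∀ x : ℝ, ⌈x⌉₊ ≤ N → x ≤ N := fun x h =>
      le_trans (Nat.le_ceil x) (Nat.cast_le.mpr h)
    have hNa : Complex.abs a₁ ≤ N := hcast _ (by omega)
    have hN3 : Complex.abs (a₃ - a₁) ≤ N := hcast _ (by omega)
    have hN4 : Complex.abs (a₄ - a₁) ≤ N := hcast _ (by omega)
    have hNd1 : Complex.abs (b₁ - a₁) ≤ N := hcast _ (by omega)
    have hNd2 : Complex.abs (b₂ - a₁) ≤ N := hcast _ (by omega)
    have hNd3 : Complex.abs (b₃ - a₁) ≤ N := hcast _ (by omega)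
    have hGd1 : Complex.Gamma (b₁ - a₁) ≠ 0 := Complex.Gamma_ne_zero (fun n => by
      have := hd₁ (-(n : ℤ)); push_cast at this; exact this)
    have hGd2 : Complex.Gamma (b₂ - a₁) ≠ 0 := Complex.Gamma_ne_zero (fun n => by
      have := hd₂ (-(n : ℤ)); push_cast at this; exact this)
    have hGd3 : Complex.Gamma (b₃ - a₁) ≠ 0 := Complex.Gamma_ne_zero (fun n => by
      have := hd₃ (-(n : ℤ)); push_cast at this; exact this)
    have hD1 : 0 < Complex.abs (Complex.Gamma (b₁ - a₁)) := AbsoluteValue.pos _ hGd1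
    have hD2 : 0 < Complex.abs (Complex.Gamma (b₂ - a₁)) := AbsoluteValue.pos _ hGd2
    have hD3 : 0 < Complex.abs (Complex.Gamma (b₃ - a₁)) := AbsoluteValue.pos _ hGd3
    have hz0 : (0:ℝ) < Complex.abs z := lt_trans one_pos hz
    set r := (Complex.abs z)⁻¹ with hr
    have hr0 : 0 < r := by rw [hr]; positivity
    have hr1 : r < 1 := by rw [hr]; exact inv_lt_one_of_one_lt₀ hz
    set K₀ := Complex.abs (Complex.Gamma a₁) * Complex.abs (Complex.Gamma (a₃ - a₁)) *
      Complex.abs (Complex.Gamma (a₄ - a₁)) /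
      (Complex.abs (Complex.Gamma (b₁ - a₁)) * Complex.abs (Complex.Gamma (b₂ - a₁)) *
        Complex.abs (Complex.Gamma (b₃ - a₁)) * ((N ! : ℕ) : ℝ) ^ 4 * δ3 ^ N * δ4 ^ N)
      with hK₀def
    have hK₀ : 0 ≤ K₀ := by
      rw [hK₀def]
      have h1 : (0:ℝ) < Complex.abs (Complex.Gamma (b₁ - a₁)) *
          Complex.abs (Complex.Gamma (b₂ - a₁)) * Complex.abs (Complex.Gamma (b₃ - a₁)) *
          ((N ! : ℕ) : ℝ) ^ 4 * δ3 ^ N * δ4 ^ N := by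
        have : (0:ℝ) < ((N ! : ℕ) : ℝ) ^ 4 := by positivity
        exact mul_pos (mul_pos (mul_pos (mul_pos (mul_pos hD1 hD2) hD3) this)
          (pow_pos hδ30 N)) (pow_pos hδ40 N)
      exact div_nonneg (by positivity) h1.le
    set CC := Complex.abs (digamma 1) * 2 + Complex.abs (digamma a₁) +
      Complex.abs (digamma (a₃ - a₁)) + Complex.abs (digamma (a₄ - a₁)) +
      Complex.abs (digamma (b₁ - a₁)) + Complex.abs (digamma (b₂ - a₁)) +
      Complex.abs (digamma (b₃ - a₁)) + Complex.abs (Complex.log (-z)) +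
      (2 + da⁻¹ + δ3⁻¹ + δ4⁻¹ + e1⁻¹ + e2⁻¹ + e3⁻¹) with hCCdef
    have hCC : 0 ≤ CC := by
      rw [hCCdef]
      have h1 : (0:ℝ) ≤ da⁻¹ := by positivity
      have h2 : (0:ℝ) ≤ δ3⁻¹ := by positivity
      have h3 : (0:ℝ) ≤ δ4⁻¹ := by positivity
      have h4 : (0:ℝ) ≤ e1⁻¹ := by positivity
      have h5 : (0:ℝ) ≤ e2⁻¹ := by positivity
      have h6 : (0:ℝ) ≤ e3⁻¹ := by positivity
      positivity
    refine Summable.of_nonneg_of_le (fun k => ?_) (fun k => ?_)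
      ((summable_aux (B := (m:ℝ) + N + 1) (by positivity) (6*N + m + 1) hr0 hr1).mul_left
        (K₀ * CC))
    · exact mul_nonneg (mul_nonneg (div_nonneg (zpow_nonneg (AbsoluteValue.nonneg _ _) _)
        (by positivity)) (AbsoluteValue.nonneg _ _))
        (add_nonneg (AbsoluteValue.nonneg _ _) (AbsoluteValue.nonneg _ _))
    · -- the main estimate for term k
      set ν := m + k with hνdef
      set Q : ℝ := (ν : ℝ) + N + 1 with hQdef
      have hN0 : (0:ℝ) ≤ (N : ℝ) := Nat.cast_nonneg N
      have hν0 : (0:ℝ) ≤ (ν : ℝ) := Nat.cast_nonneg ν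
      have hQ1 : (1:ℝ) ≤ Q := by rw [hQdef]; linarith
      have hQpos : (0:ℝ) < Q := lt_of_lt_of_le one_pos hQ1
      have hQν : (ν : ℝ) ≤ Q := by rw [hQdef]; linarith
      have hν1 : (ν : ℝ) + 1 ≤ Q := by rw [hQdef]; linarith
      have hkB : (k : ℝ) + ((m : ℝ) + N + 1) = Q := by rw [hQdef, hνdef]; push_cast; ring
      have F1 : (((N + ν)! : ℕ) : ℝ) ≤ ((ν ! : ℕ) : ℝ) * Q ^ N := by
        have h1 := factorial_le_sub (N + ν) N
        rw [show N + ν - N = ν by omega] at h1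
        calc (((N + ν)! : ℕ) : ℝ) ≤ ((ν ! * (N + ν + 1) ^ N : ℕ) : ℝ) := Nat.cast_le.mpr h1
          _ = ((ν ! : ℕ) : ℝ) * Q ^ N := by rw [hQdef]; push_cast; ring
      have F2 : ((ν ! : ℕ) : ℝ) ≤ (((ν - N)! : ℕ) : ℝ) * Q ^ N := by
        have h1 := factorial_le_sub ν N
        calc ((ν ! : ℕ) : ℝ) ≤ (((ν - N)! * (ν + 1) ^ N : ℕ) : ℝ) := Nat.cast_le.mpr h1
          _ = (((ν - N)! : ℕ) : ℝ) * ((ν : ℝ) + 1) ^ N := by push_cast; ring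
          _ ≤ (((ν - N)! : ℕ) : ℝ) * Q ^ N :=
              mul_le_mul_of_nonneg_left (pow_le_pow_left₀ (by positivity) hν1 N)
                (by positivity)
      have F3 : ((ν ! : ℕ) : ℝ) ≤ ((k ! : ℕ) : ℝ) * Q ^ m := by
        have h1 := factorial_le_sub ν m
        rw [show ν - m = k by omega] at h1
        calc ((ν ! : ℕ) : ℝ) ≤ ((k ! * (ν + 1) ^ m : ℕ) : ℝ) := Nat.cast_le.mpr h1
          _ = ((k ! : ℕ) : ℝ) * ((ν : ℝ) + 1) ^ m := by push_cast; ring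
          _ ≤ ((k ! : ℕ) : ℝ) * Q ^ m :=
              mul_le_mul_of_nonneg_left (pow_le_pow_left₀ (by positivity) hν1 m)
                (by positivity)
      have F4 : r ^ ν ≤ r ^ k := pow_le_pow_of_le_one hr0.le hr1.le (by omega)
      have habs0 : ∀ w : ℂ, 0 ≤ Complex.abs w := fun w => AbsoluteValue.nonneg _ w
      have hfs0 : (0:ℝ) < (((ν - N)! : ℕ) : ℝ) := by positivity
      have hNf0 : (0:ℝ) < ((N ! : ℕ) : ℝ) := by positivity
      have hNν0 : (0:ℝ) < (((N + ν)! : ℕ) : ℝ) := by positivity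
      have hνf0 : (0:ℝ) < ((ν ! : ℕ) : ℝ) := by positivity
      have hkf0 : (0:ℝ) < ((k ! : ℕ) : ℝ) := by positivity
      -- Gamma bounds
      have hGa := Gamma_addnat_abs_le ha₁ hNa ν
      have hGc3 := Gamma_sub_abs_le h31 hδ30 hδ31 hδ3 hN3 ν
      have hGc4 := Gamma_sub_abs_le h41 hδ40 hδ41 hδ4 hN4 ν
      have hGe1 := Gamma_sub_abs_ge hd₁ hNd1 ν
      have hGe2 := Gamma_sub_abs_ge hd₂ hNd2 ν
      have hGe3 := Gamma_sub_abs_ge hd₃ hNd3 ν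
      -- digamma bounds
      have h1c : ∀ n : ℕ, (1 : ℂ) ≠ -n := by
        intro n h
        have h2 := congrArg Complex.re h
        rw [Complex.one_re, Complex.neg_re, Complex.natCast_re] at h2
        have h3 : (0:ℝ) ≤ (n : ℝ) := Nat.cast_nonneg n
        linarith
      have hone : ∀ j : ℕ, (1:ℝ) ≤ Complex.abs (1 + (j : ℂ)) := fun j => by
        rw [show (1 : ℂ) + j = (j : ℂ) + 1 by ring, abs_cast_succ]
        have := Nat.cast_nonneg (α := ℝ) j
        linarith
      have hp1 : Complex.abs (digamma ((ν : ℕ) + 1)) ≤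
          Complex.abs (digamma 1) + ν * 1⁻¹ := by
        rw [show ((ν : ℕ) : ℂ) + 1 = 1 + ((ν : ℕ) : ℂ) by ring]
        exact digamma_addnat_abs_le h1c one_pos hone ν
      have hp2 : Complex.abs (digamma ((k : ℂ) + 1)) ≤
          Complex.abs (digamma 1) + k * 1⁻¹ := by
        rw [show (k : ℂ) + 1 = 1 + ((k : ℕ) : ℂ) by ring]
        exact digamma_addnat_abs_le h1c one_pos hone k
      have hp5 := digamma_addnat_abs_le ha₁ hda0 hda ν
      have hp3 := digamma_sub_abs_le h31 hδ30 hδ3 ν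
      have hp4 := digamma_sub_abs_le h41 hδ40 hδ4 ν
      have hp6 := digamma_sub_abs_le hd₁ he10 he1 ν
      have hp7 := digamma_sub_abs_le hd₂ he20 he2 ν
      have hp8 := digamma_sub_abs_le hd₃ he30 he3 ν
      norm_num at hp1 hp2
      have hkν : (k : ℝ) ≤ (ν : ℝ) := Nat.cast_le.mpr (by omega)
      have hE : Complex.abs
            (digamma ((ν : ℕ) + 1) + digamma ((k : ℂ) + 1) +
              digamma (a₃ - a₁ - (ν : ℕ)) + digamma (a₄ - a₁ - (ν : ℕ)) -
              digamma (a₁ + (ν : ℕ)) - digamma (b₁ - a₁ - (ν : ℕ)) -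
              digamma (b₂ - a₁ - (ν : ℕ)) - digamma (b₃ - a₁ - (ν : ℕ))) +
            Complex.abs (Complex.log (-z)) ≤ CC * Q := by
        have tri := abs_comb8 (digamma ((ν : ℕ) + 1)) (digamma ((k : ℂ) + 1))
          (digamma (a₃ - a₁ - (ν : ℕ))) (digamma (a₄ - a₁ - (ν : ℕ)))
          (digamma (a₁ + (ν : ℕ))) (digamma (b₁ - a₁ - (ν : ℕ)))
          (digamma (b₂ - a₁ - (ν : ℕ))) (digamma (b₃ - a₁ - (ν : ℕ)))
        have hS1 : (0:ℝ) ≤ 2 + da⁻¹ + δ3⁻¹ + δ4⁻¹ + e1⁻¹ + e2⁻¹ + e3⁻¹ := by positivity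
        have hS0 : (0:ℝ) ≤ Complex.abs (digamma 1) * 2 + Complex.abs (digamma a₁) +
            Complex.abs (digamma (a₃ - a₁)) + Complex.abs (digamma (a₄ - a₁)) +
            Complex.abs (digamma (b₁ - a₁)) + Complex.abs (digamma (b₂ - a₁)) +
            Complex.abs (digamma (b₃ - a₁)) + Complex.abs (Complex.log (-z)) := by
          have := habs0 (digamma 1)
          have := habs0 (digamma a₁)
          have := habs0 (digamma (a₃ - a₁))
          have := habs0 (digamma (a₄ - a₁))
          have := habs0 (digamma (b₁ - a₁))
          have := habs0 (digamma (b₂ - a₁))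
          have := habs0 (digamma (b₃ - a₁))
          have := habs0 (Complex.log (-z))
          linarith
        have hd0 : (0:ℝ) ≤ da⁻¹ := by positivity
        have hd3 : (0:ℝ) ≤ δ3⁻¹ := by positivity
        have hd4 : (0:ℝ) ≤ δ4⁻¹ := by positivity
        refine le_trans (show _ ≤ (Complex.abs (digamma 1) * 2 + Complex.abs (digamma a₁) +
            Complex.abs (digamma (a₃ - a₁)) + Complex.abs (digamma (a₄ - a₁)) +
            Complex.abs (digamma (b₁ - a₁)) + Complex.abs (digamma (b₂ - a₁)) +
            Complex.abs (digamma (b₃ - a₁)) + Complex.abs (Complex.log (-z))) +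
            (2 + da⁻¹ + δ3⁻¹ + δ4⁻¹ + e1⁻¹ + e2⁻¹ + e3⁻¹) * (ν : ℝ) by
          linarith [tri, hp1, hp2, hp3, hp4, hp5, hp6, hp7, hp8]) ?_
        refine le_trans (add_le_add (le_mul_of_one_le_right hS0 hQ1)
          (mul_le_mul_of_nonneg_left hQν hS1)) (le_of_eq ?_)
        rw [hCCdef]; ring
      -- assemble the Gamma quotient bound
      have numubnn : (0:ℝ) ≤ Complex.abs (Complex.Gamma a₁) * (((N + ν)! : ℕ) : ℝ) /
            ((N ! : ℕ) : ℝ) *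
          (Complex.abs (Complex.Gamma (a₃ - a₁)) / (δ3 ^ N * (((ν - N)! : ℕ) : ℝ))) *
          (Complex.abs (Complex.Gamma (a₄ - a₁)) / (δ4 ^ N * (((ν - N)! : ℕ) : ℝ))) := by
        refine mul_nonneg (mul_nonneg (by positivity) ?_) ?_
        · exact div_nonneg (habs0 _) (mul_nonneg (pow_nonneg hδ30.le N) hfs0.le)
        · exact div_nonneg (habs0 _) (mul_nonneg (pow_nonneg hδ40.le N) hfs0.le)
      have hGnum : Complex.abs (Complex.Gamma (a₁ + (ν : ℕ)) *
            Complex.Gamma (a₃ - a₁ - (ν : ℕ)) * Complex.Gamma (a₄ - a₁ - (ν : ℕ))) ≤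
          Complex.abs (Complex.Gamma a₁) * (((N + ν)! : ℕ) : ℝ) / ((N ! : ℕ) : ℝ) *
          (Complex.abs (Complex.Gamma (a₃ - a₁)) / (δ3 ^ N * (((ν - N)! : ℕ) : ℝ))) *
          (Complex.abs (Complex.Gamma (a₄ - a₁)) / (δ4 ^ N * (((ν - N)! : ℕ) : ℝ))) := by
        rw [map_mul, map_mul]
        have n1 : (0:ℝ) ≤ Complex.abs (Complex.Gamma a₁) * (((N + ν)! : ℕ) : ℝ) /
            ((N ! : ℕ) : ℝ) := by positivity
        refine mul_le_mul (mul_le_mul hGa hGc3 (habs0 _) n1) hGc4 (habs0 _) ?_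
        exact mul_nonneg n1 (div_nonneg (habs0 _)
          (mul_nonneg (pow_nonneg hδ30.le N) hfs0.le))
      have q1 : (0:ℝ) < Complex.abs (Complex.Gamma (b₁ - a₁)) * ((N ! : ℕ) : ℝ) /
          (((N + ν)! : ℕ) : ℝ) := div_pos (mul_pos hD1 hNf0) hNν0
      have q2 : (0:ℝ) < Complex.abs (Complex.Gamma (b₂ - a₁)) * ((N ! : ℕ) : ℝ) /
          (((N + ν)! : ℕ) : ℝ) := div_pos (mul_pos hD2 hNf0) hNν0
      have q3 : (0:ℝ) < Complex.abs (Complex.Gamma (b₃ - a₁)) * ((N ! : ℕ) : ℝ) /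
          (((N + ν)! : ℕ) : ℝ) := div_pos (mul_pos hD3 hNf0) hNν0
      have hGden : Complex.abs (Complex.Gamma (b₁ - a₁)) * ((N ! : ℕ) : ℝ) /
            (((N + ν)! : ℕ) : ℝ) *
          (Complex.abs (Complex.Gamma (b₂ - a₁)) * ((N ! : ℕ) : ℝ) / (((N + ν)! : ℕ) : ℝ)) *
          (Complex.abs (Complex.Gamma (b₃ - a₁)) * ((N ! : ℕ) : ℝ) / (((N + ν)! : ℕ) : ℝ)) ≤
          Complex.abs (Complex.Gamma (b₁ - a₁ - (ν : ℕ)) *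
            Complex.Gamma (b₂ - a₁ - (ν : ℕ)) * Complex.Gamma (b₃ - a₁ - (ν : ℕ))) := by
        rw [map_mul, map_mul]
        exact mul_le_mul (mul_le_mul hGe1 hGe2 q2.le (habs0 _)) hGe3 q3.le (mul_nonneg (habs0 _) (habs0 _))
      have hdpos : (0:ℝ) < Complex.abs (Complex.Gamma (b₁ - a₁)) * ((N ! : ℕ) : ℝ) /
            (((N + ν)! : ℕ) : ℝ) *
          (Complex.abs (Complex.Gamma (b₂ - a₁)) * ((N ! : ℕ) : ℝ) / (((N + ν)! : ℕ) : ℝ)) *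
          (Complex.abs (Complex.Gamma (b₃ - a₁)) * ((N ! : ℕ) : ℝ) / (((N + ν)! : ℕ) : ℝ)) :=
        mul_pos (mul_pos q1 q2) q3
      have hG' := div_le_div₀ numubnn hGnum hdpos hGden
      -- rewrite the power of |z| and split the quotient of Gammas
      have ht1 : Complex.abs z ^ (-((ν : ℕ) : ℤ)) = r ^ ν := by
        rw [zpow_neg, zpow_natCast, ← inv_pow, ← hr]
      rw [map_div₀, ht1, hkB]
      have t1nn : (0:ℝ) ≤ r ^ ν / (((ν !) : ℝ) * ((k !) : ℝ)) := by positivity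
      refine le_trans (mul_le_mul (mul_le_mul_of_nonneg_left hG' t1nn) hE
        (add_nonneg (habs0 _) (habs0 _))
        (mul_nonneg t1nn (div_nonneg numubnn hdpos.le))) ?_
      -- now a purely real computation
      have hUBeq : Complex.abs (Complex.Gamma a₁) * (((N + ν)! : ℕ) : ℝ) / ((N ! : ℕ) : ℝ) *
          (Complex.abs (Complex.Gamma (a₃ - a₁)) / (δ3 ^ N * (((ν - N)! : ℕ) : ℝ))) *
          (Complex.abs (Complex.Gamma (a₄ - a₁)) / (δ4 ^ N * (((ν - N)! : ℕ) : ℝ))) /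
          (Complex.abs (Complex.Gamma (b₁ - a₁)) * ((N ! : ℕ) : ℝ) / (((N + ν)! : ℕ) : ℝ) *
          (Complex.abs (Complex.Gamma (b₂ - a₁)) * ((N ! : ℕ) : ℝ) / (((N + ν)! : ℕ) : ℝ)) *
          (Complex.abs (Complex.Gamma (b₃ - a₁)) * ((N ! : ℕ) : ℝ) / (((N + ν)! : ℕ) : ℝ)))
          = K₀ * ((((N + ν)! : ℕ) : ℝ) ^ 4 / (((ν - N)! : ℕ) : ℝ) ^ 2) := by
        rw [hK₀def]
        field_simp
      rw [hUBeq]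
      have hbr : (((N + ν)! : ℕ) : ℝ) ^ 4 / (((ν - N)! : ℕ) : ℝ) ^ 2 ≤
          ((ν ! : ℕ) : ℝ) ^ 2 * Q ^ (6 * N) := by
        have h1 : (((N + ν)! : ℕ) : ℝ) ^ 4 ≤ (((ν ! : ℕ) : ℝ) * Q ^ N) ^ 4 :=
          pow_le_pow_left₀ (by positivity) F1 4
        have h2 : (((ν ! : ℕ) : ℝ) / Q ^ N) ^ 2 ≤ (((ν - N)! : ℕ) : ℝ) ^ 2 :=
          pow_le_pow_left₀ (by positivity)
            (by rw [div_le_iff₀ (by positivity)]; exact F2) 2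
        have h3 : (0:ℝ) < (((ν ! : ℕ) : ℝ) / Q ^ N) ^ 2 := by positivity
        refine le_trans (div_le_div₀ (by positivity) h1 h3 h2) (le_of_eq ?_)
        field_simp
        ring
      refine le_trans (mul_le_mul_of_nonneg_right (mul_le_mul_of_nonneg_left
        (mul_le_mul_of_nonneg_left hbr hK₀) t1nn) (mul_nonneg hCC hQpos.le)) ?_
      have step : r ^ ν / (((ν !) : ℝ) * ((k !) : ℝ)) *
          (K₀ * (((ν ! : ℕ) : ℝ) ^ 2 * Q ^ (6 * N))) * (CC * Q)
          = K₀ * CC * (Q ^ (6 * N) * Q * (((ν !) : ℝ) / ((k !) : ℝ))) * r ^ ν := by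
        field_simp
      rw [step]
      have hF3' : ((ν !) : ℝ) / ((k !) : ℝ) ≤ Q ^ m := by
        rw [div_le_iff₀ hkf0, mul_comm]
        exact F3
      refine le_trans (mul_le_mul (mul_le_mul_of_nonneg_left
        (mul_le_mul_of_nonneg_left hF3' (by positivity))
        (mul_nonneg hK₀ hCC)) F4 (pow_nonneg hr0.le ν)
        (mul_nonneg (mul_nonneg hK₀ hCC) (by positivity))) (le_of_eq (by ring))
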